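/- Let X : {q₀,…,q_J} → ℝ² be a polygonal curve with consecutive vertices distinct, and suppose at an interior vertex q_j the vector ω_j = −(X(q_{j+1}) − X(q_{j−1}))⊥ satisfies: the tangential balance condition ((X(q_{j+1}) − X(q_j))/|X(q_{j+1}) − X(q_j)| − (X(q_j) − X(q_{j−1}))/|X(q_j) − X(q_{j−1})|) · ω_j⊥ = 0. Then either |X(q_j) − X(q_{j−1})| = |X(q_{j+1}) − X(q_j)| or the two edge vectors X(q_j) − X(q_{j−1}) and X(q_{j+1}) − X(q_j) are parallel. -/

import Mathlib

open scoped RealInnerProductSpace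

/-- Clockwise rotation by π/2 in ℝ²: (v₁, v₂)⊥ = (v₂, −v₁). -/
noncomputable def perp (v : EuclideanSpace ℝ (Fin 2)) : EuclideanSpace ℝ (Fin 2) :=
  WithLp.toLp 2 ![v 1, -v 0]

lemma perp_neg_perp (v : EuclideanSpace ℝ (Fin 2)) : perp (-perp v) = v := by
  ext i
  fin_cases i <;> simp [perp]

/-- Equidistribution property: at an interior vertex `b` of a polygonal curve
`a, b, c` with vertex normal `ω = −(c − a)⊥`, if the difference of the unit edge
tangents is orthogonal to `ω⊥`, then either the two edges have equal length or
they are parallel. -/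
theorem discrete_equidistribution (a b c : EuclideanSpace ℝ (Fin 2))
    (hab : b ≠ a) (hbc : c ≠ b) (hac : c ≠ a)
    (h : ⟪‖c - b‖⁻¹ • (c - b) - ‖b - a‖⁻¹ • (b - a), perp (-perp (c - a))⟫ = 0) :
    ‖b - a‖ = ‖c - b‖ ∨ ∃ t : ℝ, c - b = t • (b - a) := by
  rw [perp_neg_perp] at h
  set p := b - a with hp
  set q := c - b with hq
  have hca : c - a = q + p := by simp [hp, hq]
  have hr : ‖p‖ ≠ 0 := norm_ne_zero_iff.mpr (sub_ne_zero.mpr hab)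
  have hs : ‖q‖ ≠ 0 := norm_ne_zero_iff.mpr (sub_ne_zero.mpr hbc)
  rw [hca, inner_sub_left, inner_add_right, inner_add_right,
    real_inner_smul_left, real_inner_smul_left, real_inner_smul_left,
    real_inner_smul_left, real_inner_self_eq_norm_sq, real_inner_self_eq_norm_sq] at h
  have hpq : ⟪p, q⟫ = ⟪q, p⟫ := real_inner_comm q p
  -- h : s⁻¹ * s² + s⁻¹⟪q,p⟫ - (r⁻¹⟪p,q⟫ + r⁻¹ r²) = 0
  have key : (‖q‖ - ‖p‖) * (1 - ⟪q, p⟫ / (‖p‖ * ‖q‖)) = 0 := by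
    field_simp at h ⊢
    rw [hpq] at h
    nlinarith [h, sq_nonneg (‖p‖ - ‖q‖)]
  rcases mul_eq_zero.mp key with h1 | h2
  · exact Or.inl (sub_eq_zero.mp h1).symm
  · right
    have h3 : ⟪q, p⟫ / (‖p‖ * ‖q‖) = 1 := by linarith
    rw [div_eq_one_iff_eq (by positivity)] at h3
    have hinner : ⟪q, p⟫ = ‖q‖ * ‖p‖ := by rw [h3, mul_comm]
    have heq : ‖p‖ • q = ‖q‖ • p := inner_eq_norm_mul_iff_real.mp hinner
    refine ⟨‖q‖ / ‖p‖, ?_⟩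
    rw [div_eq_inv_mul, mul_smul, ← heq, inv_smul_smul₀ hr]
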